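/- Let a > c = b ≥ 1, p odd, p ∤ 2D, β = p^c β₀ with p ∤ β₀, p ∤ γ₁γ₂, γ = γ₁γ₂^{-1}, and assume β₀² ≡ D (mod p^{a-b}), γ² ≡ D (mod p^b), and -β₀γ ≡ D (mod p^{min(a-b,b)}). In the case a - b ≥ b, a symmetric matrix u = [[u₁₁, -β₀u₁₁+u₁₂', -β₀u₁₁+u₁₂'],[·, β₀²u₁₁-(β₀+γ)u₁₂'+u₂₂']] (parametrized by u₁₁, u₁₂', u₂₂') lies in U_m if and only if u₁₁ ∈ p^{b-a}Z_p, u₁₂' ∈ p^{-b}Z_p, and u₂₂' ∈ Z_p; and for all such u, χ(u) = ψ((β₀²-D)u₁₁ - (β₀+γ)u₁₂') = 1. -/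

import Mathlib

open scoped Matrix

/-- The matrix y = [[p^a, β],[0, p^b]]. -/
noncomputable def yMat (p a b : ℕ) [Fact p.Prime] (β : ℚ_[p]) : Matrix (Fin 2) (Fin 2) ℚ_[p] :=
  !![(p : ℚ_[p]) ^ a, β; 0, (p : ℚ_[p]) ^ b]

/-- Membership in U_m: u is symmetric, u·y is integral, and the row vector
(γ₁,γ₂)·u·y lies in p^c ℤ_p ⊕ p^{min(b,c)} ℤ_p. -/
def memUm (p : ℕ) [Fact p.Prime] (a b c : ℕ) (β γ₁ γ₂ : ℚ_[p])
    (u : Matrix (Fin 2) (Fin 2) ℚ_[p]) : Prop :=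
  u.IsSymm ∧ (∀ i j, ‖(u * yMat p a b β) i j‖ ≤ 1) ∧
  ‖γ₁ * (u * yMat p a b β) 0 0 + γ₂ * (u * yMat p a b β) 1 0‖ ≤ (p : ℝ) ^ (-(c : ℤ)) ∧
  ‖γ₁ * (u * yMat p a b β) 0 1 + γ₂ * (u * yMat p a b β) 1 1‖ ≤ (p : ℝ) ^ (-(min b c : ℤ))

/-- χ(n(u)) = ψ(-D·u₁₁ + u₂₂). -/
noncomputable def chiUm (p : ℕ) [Fact p.Prime] (ψ : ℚ_[p] → ℂ) (D : ℚ_[p])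
    (u : Matrix (Fin 2) (Fin 2) ℚ_[p]) : ℂ :=
  ψ (-D * u 0 0 + u 1 1)

/- STATEMENT 19: a > c = b ≥ 1, a - b ≥ b, β = p^b β₀ with β₀, γ₁, γ₂ units,
γ = γ₁γ₂⁻¹, and the congruences β₀² ≡ D (mod p^{a-b}), γ² ≡ D (mod p^b),
-β₀γ ≡ D (mod p^{min(a-b,b)}) hold.  For u parametrized by (u₁₁, u₁₂', u₂₂')
as u = [[u₁₁, -β₀u₁₁+u₁₂'],[-β₀u₁₁+u₁₂', β₀²u₁₁-(β₀+γ)u₁₂'+u₂₂']]: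
u ∈ U_m iff u₁₁ ∈ p^{b-a}ℤ_p, u₁₂' ∈ p^{-b}ℤ_p, u₂₂' ∈ ℤ_p; and for all such
u ∈ U_m, χ(u) = ψ((β₀²-D)u₁₁ - (β₀+γ)u₁₂') = 1. -/
theorem stmt19 {p : ℕ} [Fact p.Prime] (hp2 : p ≠ 2) (a b : ℕ)
    (β₀ γ₁ γ₂ D : ℚ_[p]) (ψ : ℚ_[p] → ℂ)
    (hψ : ∀ x y, ψ (x + y) = ψ x * ψ y) (hψtriv : ∀ x, ψ x = 1 ↔ ‖x‖ ≤ 1)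
    (hD : ‖D‖ = 1) (hb : 1 ≤ b) (hba : b < a) (hab : b ≤ a - b)
    (hβ₀ : ‖β₀‖ = 1) (hγ₁ : ‖γ₁‖ = 1) (hγ₂ : ‖γ₂‖ = 1)
    (hcong1 : ‖β₀ ^ 2 - D‖ ≤ (p : ℝ) ^ (-((a : ℤ) - (b : ℤ))))
    (hcong2 : ‖(γ₁ * γ₂⁻¹) ^ 2 - D‖ ≤ (p : ℝ) ^ (-(b : ℤ)))
    (hcong3 : ‖β₀ * (γ₁ * γ₂⁻¹) + D‖ ≤ (p : ℝ) ^ (-(min (a - b) b : ℤ))) :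
    ∀ u11 u12 u22 : ℚ_[p],
      (memUm p a b b ((p : ℚ_[p]) ^ b * β₀) γ₁ γ₂
        !![u11, -β₀ * u11 + u12;
           -β₀ * u11 + u12,
           β₀ ^ 2 * u11 - (β₀ + γ₁ * γ₂⁻¹) * u12 + u22] ↔
        (‖u11‖ ≤ (p : ℝ) ^ ((a : ℤ) - (b : ℤ)) ∧ ‖u12‖ ≤ (p : ℝ) ^ (b : ℤ) ∧
          ‖u22‖ ≤ 1)) ∧
      (memUm p a b b ((p : ℚ_[p]) ^ b * β₀) γ₁ γ₂
        !![u11, -β₀ * u11 + u12;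
           -β₀ * u11 + u12,
           β₀ ^ 2 * u11 - (β₀ + γ₁ * γ₂⁻¹) * u12 + u22] →
        chiUm p ψ D
          !![u11, -β₀ * u11 + u12;
             -β₀ * u11 + u12,
             β₀ ^ 2 * u11 - (β₀ + γ₁ * γ₂⁻¹) * u12 + u22]
          = ψ ((β₀ ^ 2 - D) * u11 - (β₀ + γ₁ * γ₂⁻¹) * u12) ∧
        chiUm p ψ D
          !![u11, -β₀ * u11 + u12;
             -β₀ * u11 + u12,
             β₀ ^ 2 * u11 - (β₀ + γ₁ * γ₂⁻¹) * u12 + u22] = 1) := by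
  have hpP : p.Prime := Fact.out
  have hp1 : (1:ℝ) < (p:ℝ) := by exact_mod_cast hpP.one_lt
  have hp0 : (0:ℝ) < (p:ℝ) := lt_trans one_pos hp1
  set γ : ℚ_[p] := γ₁ * γ₂⁻¹ with hγdef
  have hγ2ne : γ₂ ≠ 0 := by intro h; rw [h] at hγ₂; simp at hγ₂
  have hγn : ‖γ‖ = 1 := by
    rw [hγdef, norm_mul, norm_inv, hγ₁, hγ₂]; norm_num
  have hβ₀ne : β₀ ≠ 0 := by intro h; rw [h] at hβ₀; simp at hβ₀
  have habZ : (b:ℤ) ≤ (a:ℤ) - (b:ℤ) := by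
    have h := Nat.le_sub_iff_add_le (le_of_lt hba) |>.mp hab; omega
  have hmin : min ((a:ℤ)-(b:ℤ)) (b:ℤ) = (b:ℤ) := min_eq_right habZ
  rw [hmin] at hcong3
  -- exponent monotonicity
  have hmono : ∀ m n : ℤ, m ≤ n → (p:ℝ)^m ≤ (p:ℝ)^n := fun m n h =>
    zpow_le_zpow_right₀ (le_of_lt hp1) h
  have hcong1' : ‖β₀ ^ 2 - D‖ ≤ (p : ℝ) ^ (-(b:ℤ)) :=
    le_trans hcong1 (hmono _ _ (by omega))
  -- key facts
  have h2 : ‖(2:ℚ_[p])‖ = 1 := by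
    have h1 : ‖((2:ℤ):ℚ_[p])‖ ≤ 1 := Padic.norm_int_le_one 2
    have h2' : ¬ ((p:ℤ) ∣ 2) := by
      intro h
      have : p ∣ 2 := by exact_mod_cast h
      exact hp2 ((Nat.prime_dvd_prime_iff_eq hpP Nat.prime_two).mp this)
    have := (Padic.norm_intCast_lt_one_iff (p := p) (k := 2)).not.mpr h2'
    push_cast at h1 this ⊢
    linarith [lt_or_eq_of_le h1]
  have hpbneg_lt1 : (p:ℝ) ^ (-(b:ℤ)) < 1 := by
    have : (p:ℝ)^(-(b:ℤ)) < (p:ℝ)^(0:ℤ) := zpow_lt_zpow_right₀ hp1 (by omega)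
    simpa using this
  have hsum : ‖β₀ + γ‖ ≤ (p:ℝ) ^ (-(b:ℤ)) := by
    have key : (β₀ + γ) * β₀ = (β₀^2 - D) + (β₀ * γ + D) := by ring
    have h1 : ‖(β₀ + γ) * β₀‖ ≤ (p:ℝ) ^ (-(b:ℤ)) := by
      rw [key]
      exact le_trans (Padic.nonarchimedean _ _) (max_le hcong1' hcong3)
    rwa [norm_mul, hβ₀, mul_one] at h1
  have hdiff : ‖β₀ - γ‖ = 1 := by
    have key : (β₀ - γ) * β₀ = 2 * D + ((β₀^2 - D) - (β₀ * γ + D)) := by ring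
    have hsmall : ‖(β₀^2 - D) - (β₀ * γ + D)‖ < 1 := by
      rw [sub_eq_add_neg]
      refine lt_of_le_of_lt (le_trans (Padic.nonarchimedean _ _) (max_le hcong1' ?_)) hpbneg_lt1
      rw [norm_neg]; exact hcong3
    have h2D : ‖(2:ℚ_[p]) * D‖ = 1 := by rw [norm_mul, h2, hD, mul_one]
    have hne : ‖(2:ℚ_[p]) * D‖ ≠ ‖(β₀^2 - D) - (β₀ * γ + D)‖ := by
      rw [h2D]; exact fun h => absurd h.symm (ne_of_lt hsmall)
    have : ‖(β₀ - γ) * β₀‖ = 1 := by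
      rw [key, Padic.add_eq_max_of_ne hne, h2D]
      exact max_eq_left (le_of_lt hsmall)
    rwa [norm_mul, hβ₀, mul_one] at this
  intro u11 u12 u22
  set U : Matrix (Fin 2) (Fin 2) ℚ_[p] :=
    !![u11, -β₀ * u11 + u12;
       -β₀ * u11 + u12,
       β₀ ^ 2 * u11 - (β₀ + γ) * u12 + u22] with hU
  -- entries of U * y
  have e00 : (U * yMat p a b ((p : ℚ_[p]) ^ b * β₀)) 0 0 = (p:ℚ_[p])^a * u11 := by
    rw [hU, yMat, Matrix.mul_apply, Fin.sum_univ_two]; simp; ring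
  have e01 : (U * yMat p a b ((p : ℚ_[p]) ^ b * β₀)) 0 1 = (p:ℚ_[p])^b * u12 := by
    rw [hU, yMat, Matrix.mul_apply, Fin.sum_univ_two]; simp; ring
  have e10 : (U * yMat p a b ((p : ℚ_[p]) ^ b * β₀)) 1 0
      = (p:ℚ_[p])^a * (-β₀ * u11 + u12) := by
    rw [hU, yMat, Matrix.mul_apply, Fin.sum_univ_two]; simp; ring
  have e11 : (U * yMat p a b ((p : ℚ_[p]) ^ b * β₀)) 1 1
      = (p:ℚ_[p])^b * (u22 - γ * u12) := by
    rw [hU, yMat, Matrix.mul_apply, Fin.sum_univ_two]; simp; ring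
  have hsymm : U.IsSymm := by
    rw [Matrix.IsSymm]
    ext i j
    fin_cases i <;> fin_cases j <;> simp [hU]
  have hγγ : γ₂ * γ = γ₁ := by
    rw [hγdef]; field_simp
  have row1 : γ₁ * (U * yMat p a b ((p : ℚ_[p]) ^ b * β₀)) 0 0
      + γ₂ * (U * yMat p a b ((p : ℚ_[p]) ^ b * β₀)) 1 0
      = (p:ℚ_[p])^a * (γ₂ * ((γ - β₀) * u11 + u12)) := by
    rw [e00, e10, ← hγγ]; ring
  have row2 : γ₁ * (U * yMat p a b ((p : ℚ_[p]) ^ b * β₀)) 0 1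
      + γ₂ * (U * yMat p a b ((p : ℚ_[p]) ^ b * β₀)) 1 1
      = (p:ℚ_[p])^b * (γ₂ * u22) := by
    rw [e01, e11, ← hγγ]; ring
  -- norm helper
  have hnp : ∀ (n : ℕ) (x : ℚ_[p]), ‖(p:ℚ_[p])^n * x‖ = (p:ℝ)^(-(n:ℤ)) * ‖x‖ := by
    intro n x; rw [norm_mul, Padic.norm_p_pow]
  have hle : ∀ (n : ℕ) (m : ℤ) (x : ℚ_[p]),
      ((p:ℝ)^(-(n:ℤ)) * ‖x‖ ≤ (p:ℝ)^m ↔ ‖x‖ ≤ (p:ℝ)^(m + (n:ℤ))) := by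
    intro n m x
    rw [mul_comm, ← le_div_iff₀ (zpow_pos hp0 (-(n:ℤ))), ← zpow_sub₀ (ne_of_gt hp0),
      sub_neg_eq_add]
  -- the clean characterization of membership
  have hmem : memUm p a b b ((p : ℚ_[p]) ^ b * β₀) γ₁ γ₂ U ↔
      (‖u11‖ ≤ (p:ℝ)^(a:ℤ) ∧ ‖u12‖ ≤ (p:ℝ)^(b:ℤ) ∧
       ‖-β₀ * u11 + u12‖ ≤ (p:ℝ)^(a:ℤ) ∧ ‖u22 - γ * u12‖ ≤ (p:ℝ)^(b:ℤ)) ∧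
      ‖(γ - β₀) * u11 + u12‖ ≤ (p:ℝ)^((a:ℤ) - (b:ℤ)) ∧ ‖u22‖ ≤ 1 := by
    rw [memUm]
    constructor
    · rintro ⟨-, hint, hr1, hr2⟩
      rw [row1, hnp, norm_mul, hγ₂, one_mul, hle] at hr1
      rw [row2, hnp, norm_mul, hγ₂, one_mul, hle] at hr2
      have h00 := hint 0 0; rw [e00, hnp, ← zpow_zero (p:ℝ), hle] at h00
      have h01 := hint 0 1; rw [e01, hnp, ← zpow_zero (p:ℝ), hle] at h01
      have h10 := hint 1 0; rw [e10, hnp, ← zpow_zero (p:ℝ), hle] at h10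
      have h11 := hint 1 1; rw [e11, hnp, ← zpow_zero (p:ℝ), hle] at h11
      refine ⟨⟨by simpa using h00, by simpa using h01, by simpa using h10,
        by simpa using h11⟩, ?_, ?_⟩
      · convert hr1 using 2; omega
      · simpa using hr2
    · rintro ⟨⟨h1, h2, h3, h4⟩, h5, h6⟩
      refine ⟨hsymm, ?_, ?_, ?_⟩
      · intro i j
        fin_cases i <;> fin_cases j
        · show ‖(U * yMat p a b ((p:ℚ_[p])^b * β₀)) 0 0‖ ≤ 1
          rw [e00, hnp, ← zpow_zero (p:ℝ), hle]; simpa using h1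
        · show ‖(U * yMat p a b ((p:ℚ_[p])^b * β₀)) 0 1‖ ≤ 1
          rw [e01, hnp, ← zpow_zero (p:ℝ), hle]; simpa using h2
        · show ‖(U * yMat p a b ((p:ℚ_[p])^b * β₀)) 1 0‖ ≤ 1
          rw [e10, hnp, ← zpow_zero (p:ℝ), hle]; simpa using h3
        · show ‖(U * yMat p a b ((p:ℚ_[p])^b * β₀)) 1 1‖ ≤ 1
          rw [e11, hnp, ← zpow_zero (p:ℝ), hle]; simpa using h4
      · rw [row1, hnp, norm_mul, hγ₂, one_mul, hle]
        convert h5 using 2; omega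
      · rw [row2, hnp, norm_mul, hγ₂, one_mul, hle]; simpa using h6
  have hiff : memUm p a b b ((p : ℚ_[p]) ^ b * β₀) γ₁ γ₂ U ↔
      (‖u11‖ ≤ (p : ℝ) ^ ((a : ℤ) - (b : ℤ)) ∧ ‖u12‖ ≤ (p : ℝ) ^ (b : ℤ) ∧
        ‖u22‖ ≤ 1) := by
    rw [hmem]
    constructor
    · rintro ⟨⟨-, h2, -, -⟩, h5, h6⟩
      refine ⟨?_, h2, h6⟩
      have hcomb : ‖(γ - β₀) * u11‖ ≤ (p:ℝ)^((a:ℤ)-(b:ℤ)) := by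
        have : (γ - β₀) * u11 = ((γ - β₀) * u11 + u12) + (-u12) := by ring
        rw [this]
        refine le_trans (Padic.nonarchimedean _ _) (max_le h5 ?_)
        rw [norm_neg]
        exact le_trans h2 (hmono _ _ habZ)
      rwa [norm_mul, ← norm_neg, neg_sub, hdiff, one_mul] at hcomb
    · rintro ⟨h1, h2, h3⟩
      have h2' : ‖u12‖ ≤ (p:ℝ)^((a:ℤ)-(b:ℤ)) := le_trans h2 (hmono _ _ habZ)
      have h1a : ‖u11‖ ≤ (p:ℝ)^(a:ℤ) := le_trans h1 (hmono _ _ (by omega))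
      have h2a : ‖u12‖ ≤ (p:ℝ)^(a:ℤ) := le_trans h2 (hmono _ _ (by omega))
      refine ⟨⟨h1a, h2, ?_, ?_⟩, ?_, h3⟩
      · refine le_trans (Padic.nonarchimedean _ _) (max_le ?_ h2a)
        rw [norm_mul, norm_neg, hβ₀, one_mul]; exact h1a
      · rw [sub_eq_add_neg]
        refine le_trans (Padic.nonarchimedean _ _) (max_le ?_ ?_)
        · exact le_trans h3 (hmono 0 (b:ℤ) (by omega) |>.trans_eq' (zpow_zero (p:ℝ)).symm)
        · rw [norm_neg, norm_mul, hγn, one_mul]; exact h2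
      · refine le_trans (Padic.nonarchimedean _ _) (max_le ?_ h2')
        rw [norm_mul]
        calc ‖γ - β₀‖ * ‖u11‖ ≤ 1 * ‖u11‖ := by
              refine mul_le_mul_of_nonneg_right ?_ (norm_nonneg _)
              rw [← norm_neg, neg_sub, hdiff]
            _ ≤ (p:ℝ)^((a:ℤ)-(b:ℤ)) := by rwa [one_mul]
  refine ⟨hiff, fun hmemU => ?_⟩
  obtain ⟨h1, h2, h3⟩ := hiff.mp hmemU
  have harg : ‖(β₀ ^ 2 - D) * u11 - (β₀ + γ) * u12‖ ≤ 1 := by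
    rw [sub_eq_add_neg]
    refine le_trans (Padic.nonarchimedean _ _) (max_le ?_ ?_)
    · rw [norm_mul]
      calc ‖β₀^2 - D‖ * ‖u11‖ ≤ (p:ℝ)^(-((a:ℤ)-(b:ℤ))) * (p:ℝ)^((a:ℤ)-(b:ℤ)) :=
            mul_le_mul hcong1 h1 (norm_nonneg _) (zpow_nonneg (le_of_lt hp0) _)
        _ = 1 := by rw [← zpow_add₀ (ne_of_gt hp0)]; simp
    · rw [norm_neg, norm_mul]
      calc ‖β₀ + γ‖ * ‖u12‖ ≤ (p:ℝ)^(-(b:ℤ)) * (p:ℝ)^(b:ℤ) :=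
            mul_le_mul hsum h2 (norm_nonneg _) (zpow_nonneg (le_of_lt hp0) _)
        _ = 1 := by rw [← zpow_add₀ (ne_of_gt hp0)]; simp
  have hchi : chiUm p ψ D U = ψ ((β₀ ^ 2 - D) * u11 - (β₀ + γ) * u12) := by
    rw [chiUm]
    have hU00 : U 0 0 = u11 := by simp [hU]
    have hU11 : U 1 1 = β₀ ^ 2 * u11 - (β₀ + γ) * u12 + u22 := by simp [hU]
    rw [hU00, hU11]
    have : -D * u11 + (β₀ ^ 2 * u11 - (β₀ + γ) * u12 + u22)
        = ((β₀ ^ 2 - D) * u11 - (β₀ + γ) * u12) + u22 := by ring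
    rw [this, hψ, (hψtriv u22).mpr h3, mul_one]
  exact ⟨hchi, hchi.trans ((hψtriv _).mpr harg)⟩
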